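/- Let (q^n_j)_{n∈ℕ} be a sequence of complex numbers of the form q^n_j = Σ_{r=0}^{j} μ^{rn} Q_r(n), where μ = exp(2πiθ) with θ irrational and each Q_r is a polynomial. If sup_n |q^n_j| < ∞, then every Q_r is constant; that is, q^n_j = Σ_{r=0}^j c_r μ^{rn} for constants c_r. -/

import Mathlib

open Polynomial Filter

/-- A polynomial bounded on the naturals (cast into `ℂ`) is constant. -/
lemma poly_bdd_natDegree_eq_zero {P : ℂ[X]} {M : ℝ}
    (h : ∀ n : ℕ, ‖P.eval (n : ℂ)‖ ≤ M) : P.natDegree = 0 := by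
  by_contra hd
  have hdeg : 0 < P.degree := natDegree_pos_iff_degree_pos.mp (Nat.pos_of_ne_zero hd)
  have hz : Tendsto (fun n : ℕ => ‖((n : ℂ))‖) atTop atTop := by
    simpa using tendsto_natCast_atTop_atTop (R := ℝ)
  have := P.tendsto_norm_atTop hdeg hz
  obtain ⟨n, hn⟩ := (this.eventually_ge_atTop (M + 1)).exists
  linarith [h n]

/-- One application of the difference operator `f(n+1) - c·f(n)` to an
exponential-polynomial sum. -/
lemma delta_step (μ c : ℂ) (m : ℕ) (Q : ℕ → ℂ[X]) (n : ℕ) :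
    (∑ r ∈ Finset.range m, μ ^ (r * (n + 1)) * (Q r).eval ((n + 1 : ℕ) : ℂ))
      - c * ∑ r ∈ Finset.range m, μ ^ (r * n) * (Q r).eval (n : ℂ)
    = ∑ r ∈ Finset.range m,
        μ ^ (r * n) * ((μ ^ r • (Q r).comp (X + C 1) - c • Q r)).eval (n : ℂ) := by
  rw [Finset.mul_sum, ← Finset.sum_sub_distrib]
  refine Finset.sum_congr rfl fun r _ => ?_
  have h1 : r * (n + 1) = r * n + r := by ring
  have h2 : ((n + 1 : ℕ) : ℂ) = (n : ℂ) + 1 := by push_cast; ring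
  rw [h1, pow_add, h2]
  simp only [eval_sub, eval_smul, eval_comp, eval_add, eval_X, eval_C, smul_eq_mul]
  ring

/-- Iterated boundedness: applying the difference operator `k` times preserves
boundedness, transforming the polynomials by `T r`. -/
lemma iter_bdd (μ c : ℂ) (m : ℕ) (Q : ℕ → ℂ[X]) (M : ℝ)
    (h : ∀ n : ℕ, ‖∑ r ∈ Finset.range m, μ ^ (r * n) * (Q r).eval (n : ℂ)‖ ≤ M) (k : ℕ) :
    ∃ M' : ℝ, ∀ n : ℕ,
      ‖∑ r ∈ Finset.range m, μ ^ (r * n) *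
        (((fun q => μ ^ r • q.comp (X + C 1) - c • q)^[k]) (Q r)).eval (n : ℂ)‖ ≤ M' := by
  induction k with
  | zero => exact ⟨M, by simpa using h⟩
  | succ k ih =>
    obtain ⟨M', hM'⟩ := ih
    refine ⟨M' + ‖c‖ * M', fun n => ?_⟩
    have key := delta_step μ c m
      (fun r => ((fun q => μ ^ r • q.comp (X + C 1) - c • q)^[k]) (Q r)) n
    simp only [Function.iterate_succ_apply']
    rw [← key]
    calc _ ≤ ‖∑ r ∈ Finset.range m, μ ^ (r * (n+1)) *
              (((fun q => μ ^ r • q.comp (X + C 1) - c • q)^[k]) (Q r)).eval ((n+1 : ℕ) : ℂ)‖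
            + ‖c * ∑ r ∈ Finset.range m, μ ^ (r * n) *
              (((fun q => μ ^ r • q.comp (X + C 1) - c • q)^[k]) (Q r)).eval (n : ℂ)‖ :=
          norm_sub_le _ _
      _ ≤ M' + ‖c‖ * M' := by
          rw [norm_mul]
          gcongr
          · exact hM' (n + 1)
          · exact hM' n


lemma comp_shift_natDegree (p : ℂ[X]) : (p.comp (X + C 1)).natDegree = p.natDegree := by
  rw [natDegree_comp, natDegree_X_add_C, mul_one]

lemma comp_shift_coeff (p : ℂ[X]) :
    (p.comp (X + C 1)).coeff p.natDegree = p.leadingCoeff := by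
  have hq : (X + C (1 : ℂ)).natDegree ≠ 0 := by rw [natDegree_X_add_C]; exact one_ne_zero
  have h := leadingCoeff_comp (p := p) (q := X + C 1) hq
  rw [(monic_X_add_C (1 : ℂ)).leadingCoeff, one_pow, mul_one] at h
  rw [← h, leadingCoeff, comp_shift_natDegree]

/-- The operator `q ↦ a • (q.comp (X + 1) - q)` iterated `natDegree + 1` times kills
any polynomial. -/
lemma iterate_shift_sub_eq_zero (a : ℂ) :
    ∀ k : ℕ, ∀ p : ℂ[X], p.natDegree < k →
      ((fun q : ℂ[X] => a • (q.comp (X + C 1) - q))^[k]) p = 0 := by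
  intro k
  induction k with
  | zero => intro p hp; omega
  | succ k ih =>
    intro p hp
    rw [Function.iterate_succ_apply]
    set D : ℂ[X] := p.comp (X + C 1) - p with hD
    have hcoeff : D.coeff p.natDegree = 0 := by
      rw [hD, coeff_sub, comp_shift_coeff, coeff_natDegree, sub_self]
    have hdle : D.natDegree ≤ p.natDegree :=
      (natDegree_sub_le _ _).trans (by rw [comp_shift_natDegree, max_self])
    rcases eq_or_ne D 0 with h0 | h0
    · have : a • D = 0 := by rw [h0, smul_zero]
      rw [this]
      rcases Nat.eq_zero_or_pos k with hk | hk
      · simp [hk]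
      · exact ih 0 (by simpa using hk)
    · rcases Nat.eq_zero_or_pos p.natDegree with hpd | hpd
      · -- p is a constant, so D = 0, contradiction
        exfalso
        apply h0
        rw [hD, eq_C_of_natDegree_eq_zero hpd]
        simp
      · have hdlt : D.natDegree < p.natDegree := by
          rcases lt_or_eq_of_le hdle with h | h
          · exact h
          · exfalso
            apply h0
            rw [← leadingCoeff_eq_zero, leadingCoeff, h]
            exact hcoeff
        exact ih _ (lt_of_lt_of_le (lt_of_le_of_lt (natDegree_smul_le a D) hdlt)
          (Nat.lt_succ_iff.mp hp))

/-- For `μ^r ≠ c`, the transform `T` preserves non-constancy. -/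
lemma natDegree_eq_zero_of_transform (μr c : ℂ) (hne : μr ≠ c) (Q : ℂ[X])
    (h : (μr • Q.comp (X + C 1) - c • Q).natDegree = 0) : Q.natDegree = 0 := by
  by_contra hd
  have hQ0 : Q ≠ 0 := fun h0 => hd (by simp [h0])
  have h1 : (Q.comp (X + C 1)).coeff Q.natDegree = Q.leadingCoeff := comp_shift_coeff Q
  have hco : (μr • Q.comp (X + C 1) - c • Q).coeff Q.natDegree = (μr - c) * Q.leadingCoeff := by
    rw [coeff_sub, coeff_smul, coeff_smul, h1, coeff_natDegree, smul_eq_mul, smul_eq_mul]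
    ring
  have hne0 : (μr • Q.comp (X + C 1) - c • Q).coeff Q.natDegree ≠ 0 := by
    rw [hco]
    exact mul_ne_zero (sub_ne_zero_of_ne hne) (leadingCoeff_ne_zero.mpr hQ0)
  have := le_natDegree_of_ne_zero hne0
  omega

lemma natDegree_eq_zero_of_transform_iter (μr c : ℂ) (hne : μr ≠ c) (k : ℕ) (Q : ℂ[X])
    (h : (((fun q : ℂ[X] => μr • q.comp (X + C 1) - c • q)^[k]) Q).natDegree = 0) :
    Q.natDegree = 0 := by
  induction k generalizing Q with
  | zero => simpa using h
  | succ k ih =>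
    rw [Function.iterate_succ_apply] at h
    exact natDegree_eq_zero_of_transform μr c hne Q (ih _ h)

/-- Main auxiliary lemma: boundedness forces all polynomials to be constant. -/
lemma main_aux (μ : ℂ) (hnorm : ‖μ‖ = 1) (hroot : ∀ k : ℕ, k ≠ 0 → μ ^ k ≠ 1) :
    ∀ j : ℕ, ∀ Q : ℕ → ℂ[X], ∀ M : ℝ,
      (∀ n : ℕ, ‖∑ r ∈ Finset.range (j + 1), μ ^ (r * n) * (Q r).eval (n : ℂ)‖ ≤ M) →
      ∀ r, r ≤ j → (Q r).natDegree = 0 := by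
  intro j
  induction j with
  | zero =>
    intro Q M h r hr
    interval_cases r
    apply poly_bdd_natDegree_eq_zero (M := M)
    intro n
    have := h n
    simpa using this
  | succ j ih =>
    intro Q M h
    set c : ℂ := μ ^ (j + 1) with hc
    set k : ℕ := (Q (j + 1)).natDegree + 1 with hk
    obtain ⟨M', hM'⟩ := iter_bdd μ c (j + 2) Q M h k
    -- the top transformed polynomial vanishes
    have htop : ((fun q : ℂ[X] => μ ^ (j+1) • q.comp (X + C 1) - c • q)^[k]) (Q (j + 1)) = 0 := by
      have heq : (fun q : ℂ[X] => μ ^ (j+1) • q.comp (X + C 1) - c • q)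
          = fun q : ℂ[X] => μ ^ (j+1) • (q.comp (X + C 1) - q) := by
        funext q
        rw [smul_sub, hc]
      rw [heq]
      exact iterate_shift_sub_eq_zero (μ ^ (j+1)) k (Q (j+1)) (Nat.lt_succ_self _)
    -- boundedness of the reduced sum over range (j+1)
    have hbdd' : ∀ n : ℕ, ‖∑ r ∈ Finset.range (j + 1), μ ^ (r * n) *
        (((fun q : ℂ[X] => μ ^ r • q.comp (X + C 1) - c • q)^[k]) (Q r)).eval (n : ℂ)‖ ≤ M' := by
      intro n
      have := hM' n
      rw [Finset.sum_range_succ, htop] at this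
      simpa using this
    have hdeg : ∀ r, r ≤ j →
        (((fun q : ℂ[X] => μ ^ r • q.comp (X + C 1) - c • q)^[k]) (Q r)).natDegree = 0 :=
      ih _ M' hbdd'
    have hμne : ∀ r, r ≤ j → μ ^ r ≠ c := by
      intro r hr heq
      have hμ0 : μ ≠ 0 := fun h0 => by simp [h0] at hnorm
      have : μ ^ (j + 1 - r) = 1 := by
        have h1 : μ ^ (j + 1) = μ ^ (j + 1 - r) * μ ^ r := by
          rw [← pow_add]
          congr 1
          omega
        have h2 : μ ^ (j + 1 - r) * μ ^ r = 1 * μ ^ r := by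
          rw [← h1, one_mul]
          exact (heq.trans hc).symm
        exact mul_right_cancel₀ (pow_ne_zero r hμ0) h2
      exact hroot (j + 1 - r) (by omega) this
    have hQdeg : ∀ r, r ≤ j → (Q r).natDegree = 0 := fun r hr =>
      natDegree_eq_zero_of_transform_iter (μ ^ r) c (hμne r hr) k (Q r) (hdeg r hr)
    -- now the top polynomial must also be constant
    have htopbdd : ∀ n : ℕ, ‖(Q (j + 1)).eval (n : ℂ)‖
        ≤ M + ∑ r ∈ Finset.range (j + 1), ‖(Q r).coeff 0‖ := by
      intro n
      have hμpow : ∀ s : ℕ, ‖μ ^ s‖ = 1 := fun s => by rw [norm_pow, hnorm, one_pow]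
      have heval : ∀ r, r ≤ j → (Q r).eval (n : ℂ) = (Q r).coeff 0 := by
        intro r hr
        conv_lhs => rw [eq_C_of_natDegree_eq_zero (hQdeg r hr)]
        simp
      have hsplit : μ ^ ((j + 1) * n) * (Q (j + 1)).eval (n : ℂ)
          = (∑ r ∈ Finset.range (j + 2), μ ^ (r * n) * (Q r).eval (n : ℂ))
            - ∑ r ∈ Finset.range (j + 1), μ ^ (r * n) * (Q r).eval (n : ℂ) := by
        rw [Finset.sum_range_succ]
        ring
      have h1 : ‖μ ^ ((j + 1) * n) * (Q (j + 1)).eval (n : ℂ)‖ = ‖(Q (j + 1)).eval (n : ℂ)‖ := by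
        rw [norm_mul, hμpow, one_mul]
      rw [← h1, hsplit]
      calc _ ≤ ‖∑ r ∈ Finset.range (j + 2), μ ^ (r * n) * (Q r).eval (n : ℂ)‖
              + ‖∑ r ∈ Finset.range (j + 1), μ ^ (r * n) * (Q r).eval (n : ℂ)‖ :=
            norm_sub_le _ _
        _ ≤ M + ∑ r ∈ Finset.range (j + 1), ‖(Q r).coeff 0‖ := by
            gcongr
            · exact h n
            · calc ‖∑ r ∈ Finset.range (j + 1), μ ^ (r * n) * (Q r).eval (n : ℂ)‖
                  ≤ ∑ r ∈ Finset.range (j + 1), ‖μ ^ (r * n) * (Q r).eval (n : ℂ)‖ :=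
                    norm_sum_le _ _
                _ = ∑ r ∈ Finset.range (j + 1), ‖(Q r).coeff 0‖ := by
                    refine Finset.sum_congr rfl fun r hr => ?_
                    rw [norm_mul, hμpow, one_mul,
                      heval r (Nat.lt_succ_iff.mp (Finset.mem_range.mp hr))]
    have htopdeg : (Q (j + 1)).natDegree = 0 := poly_bdd_natDegree_eq_zero htopbdd
    intro r hr
    rcases Nat.lt_succ_iff_lt_or_eq.mp (Nat.lt_succ_of_le hr) with h | h
    · exact hQdeg r (Nat.lt_succ_iff.mp h)
    · rw [h]; exact htopdeg

/-- Let `q^n = ∑_{r=0}^{j} μ^{r n} Q_r(n)` where `μ = exp(2πiθ)` with `θ`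
irrational and each `Q_r` a polynomial.  If `sup_n |q^n| < ∞`, then every `Q_r` (for `r ≤ j`) is
constant; that is, `q^n = ∑_{r=0}^{j} c_r μ^{r n}` for constants `c_r`. -/
theorem bounded_exponential_polynomial_irrational
    (θ : ℝ) (hθ : Irrational θ) (j : ℕ) (Q : ℕ → Polynomial ℂ) (q : ℕ → ℂ)
    (hq : ∀ n : ℕ, q n = ∑ r ∈ Finset.range (j + 1),
        (Complex.exp (2 * Real.pi * Complex.I * θ)) ^ (r * n) * (Q r).eval (n : ℂ))
    (hbdd : ∃ M : ℝ, ∀ n, ‖q n‖ ≤ M) :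
    ∃ c : ℕ → ℂ, (∀ r, r ≤ j → Q r = Polynomial.C (c r)) ∧
      ∀ n : ℕ, q n = ∑ r ∈ Finset.range (j + 1),
        c r * (Complex.exp (2 * Real.pi * Complex.I * θ)) ^ (r * n) := by
  set μ : ℂ := Complex.exp (2 * Real.pi * Complex.I * θ) with hμdef
  have hnorm : ‖μ‖ = 1 := by
    rw [hμdef, Complex.norm_exp]
    have : (2 * (Real.pi : ℂ) * Complex.I * (θ : ℂ)).re = 0 := by
      simp [Complex.mul_re, Complex.mul_im]
    rw [this, Real.exp_zero]
  have hroot : ∀ k : ℕ, k ≠ 0 → μ ^ k ≠ 1 := by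
    intro k hk h1
    rw [hμdef, ← Complex.exp_nat_mul] at h1
    obtain ⟨m, hm⟩ := Complex.exp_eq_one_iff.mp h1
    have hπI : (2 * (Real.pi : ℂ) * Complex.I : ℂ) ≠ 0 := Complex.two_pi_I_ne_zero
    have h2 : ((k : ℂ) * θ - (m : ℂ)) * (2 * (Real.pi : ℂ) * Complex.I) = 0 := by
      linear_combination hm
    have hkθ : (k : ℂ) * θ = (m : ℂ) := by
      rcases mul_eq_zero.mp h2 with h | h
      · exact sub_eq_zero.mp h
      · exact absurd h hπI
    have hkθℝ : (k : ℝ) * θ = (m : ℝ) := by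
      have h3 : (((k : ℝ) * θ : ℝ) : ℂ) = (((m : ℝ) : ℝ) : ℂ) := by
        push_cast
        exact_mod_cast hkθ
      exact_mod_cast h3
    apply hθ
    refine ⟨(m : ℚ) / (k : ℚ), ?_⟩
    have hk0 : (k : ℝ) ≠ 0 := Nat.cast_ne_zero.mpr hk
    push_cast
    field_simp
    linarith [hkθℝ]
  obtain ⟨M, hM⟩ := hbdd
  have hbd : ∀ n : ℕ, ‖∑ r ∈ Finset.range (j + 1), μ ^ (r * n) * (Q r).eval (n : ℂ)‖ ≤ M := by
    intro n; rw [← hq n]; exact hM n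
  have hdeg := main_aux μ hnorm hroot j Q M hbd
  refine ⟨fun r => (Q r).coeff 0, fun r hr => eq_C_of_natDegree_eq_zero (hdeg r hr), fun n => ?_⟩
  rw [hq n]
  refine Finset.sum_congr rfl fun r hr => ?_
  have hr' : r ≤ j := Nat.lt_succ_iff.mp (Finset.mem_range.mp hr)
  conv_lhs => rw [eq_C_of_natDegree_eq_zero (hdeg r hr')]
  simp [mul_comm]
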